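/- Let X be a scattered compact Hausdorff space. Then for every continuous map f : X → Y to a metrizable space Y, the image f(X) is at most countable. -/

import Mathlib

open Cardinal Set Topology

universe u

def FunctionallyHausdorff (X : Type u) [TopologicalSpace X] : Prop :=
  ∀ x y : X, x ≠ y → ∃ f : X → unitInterval, Continuous f ∧ f x = 0 ∧ f y = 1

def IsCechComplete (X : Type u) [TopologicalSpace X] : Prop :=
  ∃ (K : Type u) (_ : TopologicalSpace K) (e : X → K),
    CompactSpace K ∧ T2Space K ∧ IsEmbedding e ∧ DenseRange e ∧ IsGδ (Set.range e)

noncomputable def lindelofNumber (X : Type u) [TopologicalSpace X] : Cardinal.{u} :=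
  sInf {κ : Cardinal.{u} | ℵ₀ ≤ κ ∧ ∀ U : Set (Set X), (∀ u ∈ U, IsOpen u) → ⋃₀ U = Set.univ →
    ∃ V ⊆ U, #↥V ≤ κ ∧ ⋃₀ V = Set.univ}

noncomputable def pseudocharacter (X : Type u) [TopologicalSpace X] : Cardinal.{u} :=
  sInf {κ : Cardinal.{u} | ℵ₀ ≤ κ ∧ ∀ x : X, ∃ 𝒰 : Set (Set X),
    #↥𝒰 ≤ κ ∧ (∀ U ∈ 𝒰, IsOpen U ∧ x ∈ U) ∧ ⋂₀ 𝒰 = ⋂₀ {U : Set X | IsOpen U ∧ x ∈ U}}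

def IsScatteredSet {X : Type u} [TopologicalSpace X] (S : Set X) : Prop :=
  ∀ T ⊆ S, T.Nonempty → ∃ x ∈ T, ∃ U : Set X, IsOpen U ∧ U ∩ T = {x}

def IsKAnalytic (X : Type u) [TopologicalSpace X] : Prop :=
  ∃ (P : Type u) (_ : TopologicalSpace P) (f : P → X),
    LindelofSpace P ∧ IsCechComplete P ∧ Continuous f ∧ Function.Surjective f

def IsAnalyticSpace (X : Type u) [TopologicalSpace X] : Prop :=
  ∃ (P : Type u) (_ : TopologicalSpace P), PolishSpace P ∧
    ∃ f : P → X, Continuous f ∧ Function.Surjective f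

noncomputable def boundingNumber : Cardinal.{0} :=
  sInf {κ : Cardinal.{0} | ∃ B : Set (ℕ → ℕ), #↥B = κ ∧
    ∀ y : ℕ → ℕ, ∃ x ∈ B, {n : ℕ | ¬ x n ≤ y n}.Infinite}

lemma key {X Z : Type*} [TopologicalSpace X] [CompactSpace X] [T2Space X]
    [TopologicalSpace Z] [T2Space Z]
    (hscat : IsScatteredSet (Set.univ : Set X))
    (g : X → Z) (hg : Continuous g) {D : Set Z} (hD : IsClosed D) (hne : D.Nonempty)
    (hDr : D ⊆ Set.range g) :
    ∃ d ∈ D, ∃ W : Set Z, IsOpen W ∧ W ∩ D = {d} := by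
  set S : Set (Set X) := {A | IsClosed A ∧ D ⊆ g '' A} with hS
  have huniv : (Set.univ : Set X) ∈ S := by
    refine ⟨isClosed_univ, fun d hd => ?_⟩
    obtain ⟨x, hx⟩ := hDr hd
    exact ⟨x, trivial, hx⟩
  have hchaincond : ∀ c ⊆ S, IsChain (· ⊆ ·) c → c.Nonempty → ∃ lb ∈ S, ∀ s ∈ c, lb ⊆ s := by
    intro c hcS hchain hcne
    refine ⟨⋂₀ c, ⟨isClosed_sInter fun A hA => (hcS hA).1, fun d hd => ?_⟩,
      fun s hs => sInter_subset_of_mem hs⟩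
    haveI : Nonempty c := hcne.to_subtype
    have hdir : Directed (· ⊇ ·) (fun A : c => (A : Set X) ∩ g ⁻¹' {d}) := by
      intro A B
      rcases hchain.total A.2 B.2 with h | h
      · exact ⟨A, Set.inter_subset_inter_left _ (le_refl _) |>.trans (le_refl _),
          Set.inter_subset_inter_left _ h⟩
      · exact ⟨B, Set.inter_subset_inter_left _ h, le_refl _⟩
    have hnon : ∀ A : c, ((A : Set X) ∩ g ⁻¹' {d}).Nonempty := by
      intro A
      obtain ⟨x, hxA, hxd⟩ := (hcS A.2).2 hd
      exact ⟨x, hxA, hxd⟩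
    obtain ⟨x, hx⟩ := IsCompact.nonempty_iInter_of_directed_nonempty_isCompact_isClosed
      (fun A : c => (A : Set X) ∩ g ⁻¹' {d}) hdir hnon
      (fun A => (((hcS A.2).1.isCompact)).inter_right (IsClosed.preimage hg isClosed_singleton))
      (fun A => ((hcS A.2).1.inter (IsClosed.preimage hg isClosed_singleton)))
    simp only [Set.mem_iInter, Set.mem_inter_iff, Set.mem_preimage, Set.mem_singleton_iff] at hx
    obtain ⟨A0, hA0⟩ := hcne
    exact ⟨x, Set.mem_sInter.mpr fun A hA => (hx ⟨A, hA⟩).1, (hx ⟨A0, hA0⟩).2⟩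
  obtain ⟨m, hmS, hmin⟩ : ∃ m, m ∈ S ∧ ∀ a ∈ S, a ⊆ m → a = m := by
    obtain ⟨m, hsub, hmin⟩ := zorn_superset_nonempty S hchaincond _ huniv
    exact ⟨m, hmin.prop, fun a ha hsub' => hmin.eq_of_le ha hsub'⟩
  -- m nonempty
  have hmne : m.Nonempty := by
    obtain ⟨d, hd⟩ := hne
    obtain ⟨x, hx, -⟩ := hmS.2 hd
    exact ⟨x, hx⟩
  obtain ⟨x, hxm, U, hU, hUm⟩ := hscat m (subset_univ m) hmne
  have hm'eq : m \ U = m \ {x} := by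
    ext y; constructor
    · rintro ⟨hy, hyU⟩
      exact ⟨hy, fun h => hyU (by rw [h] at hy ⊢; have : x ∈ U ∩ m := hUm ▸ rfl; exact this.1)⟩
    · rintro ⟨hy, hyx⟩
      refine ⟨hy, fun hyU => hyx ?_⟩
      have : y ∈ U ∩ m := ⟨hyU, hy⟩
      rw [hUm] at this; exact this
  set m' := m \ U with hm'
  have hm'c : IsClosed m' := hmS.1.sdiff hU
  have hm'ne : ¬ D ⊆ g '' m' := by
    intro hsub
    have : m' = m := hmin m' ⟨hm'c, hsub⟩ diff_subset
    have hxm' : x ∈ m' := this ▸ hxm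
    rw [hm'eq] at hxm'
    exact hxm'.2 rfl
  obtain ⟨d, hdD, hdm'⟩ := not_subset.mp hm'ne
  refine ⟨d, hdD, (g '' m')ᶜ, ?_, ?_⟩
  · rw [isOpen_compl_iff]
    exact ((hm'c.isCompact).image hg).isClosed
  · ext y
    simp only [Set.mem_inter_iff, Set.mem_compl_iff, Set.mem_singleton_iff]
    constructor
    · rintro ⟨hyW, hyD⟩
      obtain ⟨a, ham, rfl⟩ := hmS.2 hyD
      have : a ∉ m' := fun h => hyW ⟨a, h, rfl⟩
      rw [hm'eq] at this
      have hax : a = x := by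
        by_contra hne'
        exact this ⟨ham, hne'⟩
      -- need g x = d
      obtain ⟨b, hbm, hbd⟩ := hmS.2 hdD
      have : b ∉ m' := fun h => hdm' ⟨b, h, hbd⟩
      rw [hm'eq] at this
      have hbx : b = x := by
        by_contra hne'
        exact this ⟨hbm, hne'⟩
      rw [hax, ← hbx, hbd]
    · rintro rfl
      exact ⟨hdm', hdD⟩

theorem stmt18 {X Y : Type u} [TopologicalSpace X] [CompactSpace X] [T2Space X]
    [TopologicalSpace Y] [TopologicalSpace.MetrizableSpace Y]
    (hscat : IsScatteredSet (Set.univ : Set X))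
    (f : X → Y) (hf : Continuous f) :
    (Set.range f).Countable := by
  set Z := ↥(Set.range f) with hZ
  have hcomp : IsCompact (Set.range f) := isCompact_range hf
  haveI : CompactSpace Z := isCompact_iff_compactSpace.mp hcomp
  letI : MetricSpace Z := TopologicalSpace.metrizableSpaceMetric Z
  haveI : SecondCountableTopology Z := inferInstance
  by_contra hcount
  have hnc : ¬ (Set.univ : Set Z).Countable := by
    rw [Set.countable_univ_iff]
    rw [← Set.countable_coe_iff] at hcount
    exact hcount
  obtain ⟨D, hDperf, hDne, -⟩ :=
    exists_perfect_nonempty_of_isClosed_of_not_countable isClosed_univ hnc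
  set g : X → Z := Set.rangeFactorization f with hg'
  have hg : Continuous g := hf.subtype_mk _
  have hDr : D ⊆ Set.range g := fun d _ => Set.rangeFactorization_surjective d
  obtain ⟨d, hdD, W, hW, hWD⟩ := key hscat g hg hDperf.closed hDne hDr
  have hacc := hDperf.acc d hdD
  rw [accPt_iff_nhds] at hacc
  have hdW : d ∈ W := by
    have : d ∈ W ∩ D := hWD ▸ rfl
    exact this.1
  obtain ⟨y, hy, hyne⟩ := hacc W (hW.mem_nhds hdW)
  exact hyne (hWD ▸ hy : y ∈ ({d} : Set Z))
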